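/- Let c ∈ ℂ, let k₂ ∈ ℂ with k₂ ≠ 0, and set a = 1, b = 0. The ℂ-bilinear product ∘ on A defined on basis elements by L_m∘L_n = cL_{m+n+1} − (n+1)L_{m+n}, L_m∘W_n = −(m+n+2)W_{m+n} + cW_{m+n+1}, W_m∘L_n = −(n+1)W_{m+n} + cW_{m+n+1} and W_m∘W_n = k₂W_{m+n+1} is left-symmetric, and it is a compatible left-symmetric algebraic structure on the Lie algebra Coeff(W(1,0)). -/
import Mathlib


noncomputable section

set_option maxHeartbeats 1000000

/-- `A` is the free `ℂ`-vector space with basis `{L m : m ∈ ℤ} ∪ {W m : m ∈ ℤ}`. -/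
abbrev A : Type := (ℤ ⊕ ℤ) →₀ ℂ

/-- The basis vector `L m`. -/
def L (m : ℤ) : A := Finsupp.single (Sum.inl m) 1

/-- The basis vector `W m`. -/
def W (m : ℤ) : A := Finsupp.single (Sum.inr m) 1

/-- Corollary 3.8 (11), on Coeff(W(1,0)), with `k₂ ≠ 0`. -/
theorem stmt19 (c k₂ : ℂ) (hk : k₂ ≠ 0)
    -- `M` is the ℂ-bilinear product `∘` given on basis elements by:
    (M : A →ₗ[ℂ] A →ₗ[ℂ] A)
    (hLL : ∀ m n : ℤ, M (L m) (L n) = c • L (m + n + 1) - ((n : ℂ) + 1) • L (m + n))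
    (hLW : ∀ m n : ℤ, M (L m) (W n) =
      -((m : ℂ) + (n : ℂ) + 2) • W (m + n) + c • W (m + n + 1))
    (hWL : ∀ m n : ℤ, M (W m) (L n) = -((n : ℂ) + 1) • W (m + n) + c • W (m + n + 1))
    (hWW : ∀ m n : ℤ, M (W m) (W n) = k₂ • W (m + n + 1))
    -- `B` is the ℂ-bilinear Lie bracket of Coeff(W(a,b)) on basis elements:
    (B : A →ₗ[ℂ] A →ₗ[ℂ] A)
    (hBLL : ∀ m n : ℤ, B (L m) (L n) = ((m : ℂ) - (n : ℂ)) • L (m + n))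
    (hBLW : ∀ m n : ℤ, B (L m) (W n) =
      (((m : ℂ) + 1) * ((1 : ℂ) - 1) - ((n : ℂ) + 1)) • W (m + n)
        + (0 : ℂ) • W (m + n + 1))
    (hBWL : ∀ m n : ℤ, B (W n) (L m) = -B (L m) (W n))
    (hBWW : ∀ m n : ℤ, B (W m) (W n) = 0) :
    -- `∘ = M` is left-symmetric:
    ((∀ x y z : A, M (M x y) z - M x (M y z) = M (M y x) z - M y (M x z)) ∧
    -- and compatible with the Lie bracket:
    (∀ x y : A, M x y - M y x = B x y)) := by
  have hL : ∀ m : ℤ, Finsupp.single (Sum.inl m) (1:ℂ) = L m := fun _ => rfl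
  have hW : ∀ m : ℤ, Finsupp.single (Sum.inr m) (1:ℂ) = W m := fun _ => rfl
  constructor
  · -- left symmetry
    let T1 : A →ₗ[ℂ] A →ₗ[ℂ] A →ₗ[ℂ] A := (LinearMap.llcomp ℂ A A (A →ₗ[ℂ] A) M).comp M
    let H : A →ₗ[ℂ] (A →ₗ[ℂ] A) →ₗ[ℂ] (A →ₗ[ℂ] A) := (LinearMap.llcomp ℂ A A A).comp M
    let T2 : A →ₗ[ℂ] A →ₗ[ℂ] A →ₗ[ℂ] A := (LinearMap.lcomp ℂ (A →ₗ[ℂ] A) M).comp H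
    have hT1 : ∀ x y z : A, T1 x y z = M (M x y) z := fun _ _ _ => rfl
    have hT2 : ∀ x y z : A, T2 x y z = M x (M y z) := fun _ _ _ => rfl
    have hG : T1 + T2.flip = T1.flip + T2 := by
      apply Finsupp.lhom_ext'; intro p
      apply LinearMap.ext_ring
      apply Finsupp.lhom_ext'; intro q
      apply LinearMap.ext_ring
      apply Finsupp.lhom_ext'; intro r
      apply LinearMap.ext_ring
      simp only [LinearMap.comp_apply, Finsupp.lsingle_apply, LinearMap.add_apply,
        LinearMap.flip_apply, hT1, hT2]
      rcases p with m | m <;> rcases q with n | n <;> rcases r with k | k <;>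
        simp only [hL, hW, hLL, hLW, hWL, hWW, map_sub, map_add, map_smul, map_neg,
          LinearMap.sub_apply, LinearMap.add_apply, LinearMap.smul_apply, LinearMap.neg_apply,
          smul_sub, smul_add, smul_smul, smul_neg, neg_smul] <;>
        ring_nf <;>
        module
    intro x y z
    have h := DFunLike.congr_fun (DFunLike.congr_fun (DFunLike.congr_fun hG x) y) z
    simp only [LinearMap.add_apply, LinearMap.flip_apply, hT1, hT2] at h
    rw [sub_eq_sub_iff_add_eq_add]
    exact h
  · -- compatibility
    have hG : M = B + M.flip := by
      apply Finsupp.lhom_ext'; intro p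
      apply LinearMap.ext_ring
      apply Finsupp.lhom_ext'; intro q
      apply LinearMap.ext_ring
      simp only [LinearMap.comp_apply, Finsupp.lsingle_apply, LinearMap.add_apply,
        LinearMap.flip_apply]
      rcases p with m | m <;> rcases q with n | n <;>
        simp only [hL, hW, hLL, hLW, hWL, hWW, hBLL, hBWL, hBLW, hBWW, neg_add, neg_smul,
          neg_neg, zero_smul, add_zero, zero_add, smul_neg] <;>
        ring_nf <;>
        module
    intro x y
    have h := DFunLike.congr_fun (DFunLike.congr_fun hG x) y
    simp only [LinearMap.add_apply, LinearMap.flip_apply] at h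
    rw [sub_eq_iff_eq_add]
    exact h

end
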